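/- Let f : ℤ → ℕ be a function with f(x) = 0 for all but finitely many x and |f(x+1) - f(x)| ≤ 1 for all x ∈ ℤ. Then for every x ∈ ℤ, f(x)² ≤ Σ_{y ∈ ℤ} f(y). -/

import Mathlib

open MeasureTheory Filter

lemma sum_odd_sq (n : ℕ) : ∑ k ∈ Finset.range n, (2 * k + 1) = n ^ 2 := by
  induction n with
  | zero => simp
  | succ n ih => rw [Finset.sum_range_succ, ih]; ring

/-- if `f : ℤ → ℕ` vanishes outside a finite set and has slopes
at most one in absolute value, then `f(x)² ≤ Σ_y f(y)` for every `x`. -/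
theorem statement3 (f : ℤ → ℕ) (hfin : (Function.support f).Finite)
    (hslope : ∀ x : ℤ, |(f (x + 1) : ℤ) - (f x : ℤ)| ≤ 1) (x : ℤ) :
    f x ^ 2 ≤ ∑ᶠ y : ℤ, f y := by
  classical
  set n := f x with hn
  have key : ∀ m : ℕ, (n : ℤ) - m ≤ f (x + m) ∧ (n : ℤ) - m ≤ f (x - m) := by
    intro m
    induction m with
    | zero => simp [hn]
    | succ m ih =>
      obtain ⟨h1, h2⟩ := ih
      constructor
      · have h := hslope (x + m)
        rw [abs_le] at h
        have e : x + ((m + 1 : ℕ) : ℤ) = (x + m) + 1 := by push_cast; ring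
        rw [e]
        push_cast at h1 ⊢
        omega
      · have h := hslope (x - (m + 1))
        rw [abs_le] at h
        have e1 : (x - ((m : ℤ) + 1)) + 1 = x - m := by ring
        rw [e1] at h
        have e2 : x - ((m + 1 : ℕ) : ℤ) = x - ((m : ℤ) + 1) := by push_cast; ring
        rw [e2]
        push_cast at h1 h2 ⊢
        omega
  set A : Finset ℤ := (Finset.range n).image (fun k : ℕ => x + k) with hA
  set B : Finset ℤ := (Finset.range n).image (fun k : ℕ => x - 1 - k) with hB
  have hAB : Disjoint A B := by
    rw [Finset.disjoint_left]
    rintro a ha hb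
    simp only [hA, hB, Finset.mem_image, Finset.mem_range] at ha hb
    obtain ⟨k, _, rfl⟩ := ha
    obtain ⟨j, _, hj⟩ := hb
    omega
  have sumA : ∑ y ∈ A, f y = ∑ k ∈ Finset.range n, f (x + k) :=
    Finset.sum_image (by intro a _ b _ h; simp only at h; omega)
  have sumB : ∑ y ∈ B, f y = ∑ k ∈ Finset.range n, f (x - 1 - k) :=
    Finset.sum_image (by intro a _ b _ h; simp only at h; omega)
  have hlow : n ^ 2 ≤ ∑ y ∈ A ∪ B, f y := by
    rw [Finset.sum_union hAB, sumA, sumB, ← Finset.sum_add_distrib]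
    have hrefl := Finset.sum_range_reflect (fun j => 2 * j + 1) n
    calc n ^ 2 = ∑ k ∈ Finset.range n, (2 * (n - 1 - k) + 1) := by
          rw [hrefl, sum_odd_sq]
      _ ≤ ∑ k ∈ Finset.range n, (f (x + k) + f (x - 1 - k)) := by
          apply Finset.sum_le_sum
          intro k hk
          rw [Finset.mem_range] at hk
          have h1 := (key k).1
          have h2 := (key (k + 1)).2
          have e : x - ((k + 1 : ℕ) : ℤ) = x - 1 - k := by push_cast; ring
          rw [e] at h2
          push_cast at h1 h2
          omega
  rw [finsum_eq_sum f hfin]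
  calc n ^ 2 ≤ ∑ y ∈ A ∪ B, f y := hlow
    _ ≤ ∑ y ∈ (A ∪ B) ∪ hfin.toFinset, f y :=
        Finset.sum_le_sum_of_subset Finset.subset_union_left
    _ = ∑ y ∈ hfin.toFinset, f y := by
        refine (Finset.sum_subset Finset.subset_union_right ?_).symm
        intro y _ hy
        simp only [Set.Finite.mem_toFinset, Function.mem_support, not_not] at hy
        exact hy
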